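/- Let X be a pointed metric space all of whose centered balls are finite, with uniform exponentially bounded growth: there exist α > 0 and R₁ such that b^u_X(n) ≤ exp(α·n) for all n ≥ R₁. Suppose there is a map f : X → Y to a pointed metric space Y with finite centered balls, satisfying |f(x)| ≤ max(|x|, R₀) and d(f(x),f(x')) ≥ C·d(x,x') − u(max(|x|,|x'|)) for a nondecreasing sublinear function u (i.e., u(n)/n → 0). If Y has subexponential growth (b_Y(n)^{1/n} → 1), then X has subexponential growth (b_X(n)^{1/n} → 1). -/

import Mathlib

open Filter

/-- Subexponential growth passes from the target to the source along a radially
controlled, sublinearly expansive map, assuming uniform exponentially bounded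
growth of the source. -/
theorem stmt5 {X Y : Type*} [MetricSpace X] [MetricSpace Y] (x₀ : X) (y₀ : Y)
    (hXfin : ∀ (x : X) (r : ℝ), (Metric.closedBall x r).Finite)
    (hYfin : ∀ r : ℝ, (Metric.closedBall y₀ r).Finite)
    (α R₁ : ℝ) (hα : 0 < α)
    (hUEB : ∀ (x : X) (n : ℝ), R₁ ≤ n →
      (Nat.card (Metric.closedBall x n) : ℝ) ≤ Real.exp (α * n))
    (u : ℝ → ℝ) (hu_mono : Monotone u) (hu0 : ∀ r, 0 ≤ u r)
    (hu_sub : Tendsto (fun n => u n / n) atTop (nhds 0))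
    (f : X → Y) (R₀ C : ℝ) (hR₀ : 0 < R₀) (hC : 0 < C)
    (hrad : ∀ x, dist (f x) y₀ ≤ max (dist x x₀) R₀)
    (hexp : ∀ x x', C * dist x x' - u (max (dist x x₀) (dist x' x₀)) ≤ dist (f x) (f x'))
    (hY : Tendsto (fun n : ℕ =>
      (Nat.card (Metric.closedBall y₀ (n : ℝ)) : ℝ) ^ (1 / (n : ℝ))) atTop (nhds 1)) :
    Tendsto (fun n : ℕ =>
      (Nat.card (Metric.closedBall x₀ (n : ℝ)) : ℝ) ^ (1 / (n : ℝ))) atTop (nhds 1) := by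
  classical
  set M : ℝ → ℝ := fun n => max (u n / C) (max R₁ 0) with hM
  have hM0 : ∀ n, 0 ≤ M n := fun n => le_trans (le_max_right _ _) (le_max_right _ _)
  -- key counting inequality
  have key : ∀ n : ℕ, R₀ ≤ n →
      (Nat.card (Metric.closedBall x₀ (n : ℝ)) : ℝ) ≤
        Real.exp (α * M n) * (Nat.card (Metric.closedBall y₀ (n : ℝ)) : ℝ) := by
    intro n hn
    set s := (hXfin x₀ (n : ℝ)).toFinset with hs
    set t := (hYfin (n : ℝ)).toFinset with ht
    have hscard : (Nat.card (Metric.closedBall x₀ (n : ℝ)) : ℕ) = s.card := by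
      rw [Nat.card_coe_set_eq, Set.ncard_eq_toFinset_card _ (hXfin x₀ (n : ℝ))]
    have htcard : (Nat.card (Metric.closedBall y₀ (n : ℝ)) : ℕ) = t.card := by
      rw [Nat.card_coe_set_eq, Set.ncard_eq_toFinset_card _ (hYfin (n : ℝ))]
    set K : ℕ := ⌊Real.exp (α * M n)⌋₊ with hK
    have hfib : ∀ y ∈ s.image f, (s.filter fun x => f x = y).card ≤ K := by
      intro y hy
      obtain ⟨x, hxs, hxy⟩ := Finset.mem_image.mp hy
      have hxball : dist x x₀ ≤ (n : ℝ) := by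
        simpa [Metric.mem_closedBall] using (Set.Finite.mem_toFinset _).mp hxs
      have hsub : (s.filter fun x' => f x' = y) ⊆ (hXfin x (M n)).toFinset := by
        intro x' hx'
        rw [Finset.mem_filter] at hx'
        obtain ⟨hx's, hx'y⟩ := hx'
        have hx'ball : dist x' x₀ ≤ (n : ℝ) := by
          simpa [Metric.mem_closedBall] using (Set.Finite.mem_toFinset _).mp hx's
        have hff : dist (f x) (f x') = 0 := by rw [hxy, hx'y, dist_self]
        have h1 := hexp x x'
        rw [hff] at h1
        have h2 : C * dist x x' ≤ u (max (dist x x₀) (dist x' x₀)) := by linarith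
        have h3 : u (max (dist x x₀) (dist x' x₀)) ≤ u n :=
          hu_mono (max_le hxball hx'ball)
        have h4 : dist x x' ≤ u n / C :=
          (le_div_iff₀' hC).mpr (h2.trans h3)
        have h5 : dist x' x ≤ M n := by
          rw [dist_comm]; exact h4.trans (le_max_left _ _)
        exact (Set.Finite.mem_toFinset _).mpr (Metric.mem_closedBall.mpr h5)
      have hcard1 : (s.filter fun x' => f x' = y).card ≤ (hXfin x (M n)).toFinset.card :=
        Finset.card_le_card hsub
      have hcard2 : ((hXfin x (M n)).toFinset.card : ℝ) ≤ Real.exp (α * M n) := by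
        have := hUEB x (M n) (le_trans (le_trans (le_max_left _ _) (le_max_right _ _)) (le_refl (M n)))
        rwa [Nat.card_coe_set_eq, Set.ncard_eq_toFinset_card _ (hXfin x (M n))] at this
      have : ((s.filter fun x' => f x' = y).card : ℝ) ≤ Real.exp (α * M n) :=
        le_trans (by exact_mod_cast hcard1) hcard2
      exact Nat.le_floor this
    have himg : s.image f ⊆ t := by
      intro y hy
      obtain ⟨x, hxs, hxy⟩ := Finset.mem_image.mp hy
      have hxball : dist x x₀ ≤ (n : ℝ) := by
        simpa [Metric.mem_closedBall] using (Set.Finite.mem_toFinset _).mp hxs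
      have : dist y y₀ ≤ (n : ℝ) := by
        rw [← hxy]
        exact (hrad x).trans (max_le hxball hn)
      exact (Set.Finite.mem_toFinset _).mpr (Metric.mem_closedBall.mpr this)
    have hcount : s.card ≤ K * t.card :=
      (Finset.card_le_mul_card_image s K hfib).trans
        (Nat.mul_le_mul_left K (Finset.card_le_card himg))
    have hKle : (K : ℝ) ≤ Real.exp (α * M n) := Nat.floor_le (Real.exp_pos _).le
    calc (Nat.card (Metric.closedBall x₀ (n : ℝ)) : ℝ) = (s.card : ℝ) := by
          exact_mod_cast hscard
      _ ≤ (K : ℝ) * (t.card : ℝ) := by exact_mod_cast hcount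
      _ ≤ Real.exp (α * M n) * (t.card : ℝ) :=
          mul_le_mul_of_nonneg_right hKle (Nat.cast_nonneg _)
      _ = Real.exp (α * M n) * (Nat.card (Metric.closedBall y₀ (n : ℝ)) : ℝ) := by
          rw [htcard]
  -- exponent factor tends to 1
  have hMlim : Tendsto (fun n : ℕ => α * M n / n) atTop (nhds 0) := by
    have h1 : Tendsto (fun n : ℕ => u n / n / C) atTop (nhds 0) := by
      have := (hu_sub.comp tendsto_natCast_atTop_atTop).div_const C
      simpa using this
    have h2 : Tendsto (fun n : ℕ => max R₁ 0 / n) atTop (nhds 0) :=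
      tendsto_const_div_atTop_nhds_zero_nat _
    have h3 : Tendsto (fun n : ℕ => u n / n / C + max R₁ 0 / n) atTop (nhds 0) := by
      simpa using h1.add h2
    have h4 : Tendsto (fun n : ℕ => M n / n) atTop (nhds 0) := by
      apply squeeze_zero' _ _ h3
      · filter_upwards [eventually_gt_atTop 0] with n hn
        positivity
      · filter_upwards [eventually_gt_atTop 0] with n hn
        have hn' : (0 : ℝ) < n := by exact_mod_cast hn
        rw [div_le_iff₀ hn']
        rw [add_mul, div_mul_cancel₀ _ hn'.ne']
        have : u n / C / n * n = u n / C := div_mul_cancel₀ _ hn'.ne'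
        have huC : u ↑n / ↑n / C = u ↑n / C / ↑n := by ring
        rw [huC, this]
        exact max_le (le_add_of_nonneg_right (le_max_right R₁ 0))
          (le_add_of_nonneg_left (div_nonneg (hu0 _) hC.le))
    simpa [mul_div_assoc] using h4.const_mul α
  have hexp1 : Tendsto (fun n : ℕ => Real.exp (α * M n / n)) atTop (nhds 1) := by
    simpa [Function.comp_def] using (Real.continuous_exp.tendsto 0).comp hMlim
  -- upper bound sequence tends to 1
  have hupper : Tendsto (fun n : ℕ => Real.exp (α * M n / n) *
      (Nat.card (Metric.closedBall y₀ (n : ℝ)) : ℝ) ^ (1 / (n : ℝ))) atTop (nhds 1) := by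
    simpa using hexp1.mul hY
  -- lower bound: 1 ≤ b_X(n)^(1/n)
  have hlow : ∀ n : ℕ, 1 ≤ (Nat.card (Metric.closedBall x₀ (n : ℝ)) : ℝ) ^ (1 / (n : ℝ)) := by
    intro n
    have hne : (Metric.closedBall x₀ (n : ℝ)).Nonempty := ⟨x₀, by simp⟩
    haveI := (hXfin x₀ (n : ℝ)).to_subtype
    haveI : Nonempty (Metric.closedBall x₀ (n : ℝ)) := hne.to_subtype
    have hpos : 0 < Nat.card (Metric.closedBall x₀ (n : ℝ)) := Nat.card_pos
    exact Real.one_le_rpow (by exact_mod_cast hpos) (by positivity)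
  apply tendsto_of_tendsto_of_tendsto_of_le_of_le' tendsto_const_nhds hupper
  · exact Eventually.of_forall hlow
  · filter_upwards [eventually_ge_atTop ⌈R₀⌉₊, eventually_gt_atTop 0] with n hn hn0
    have hnR : R₀ ≤ (n : ℝ) := le_trans (Nat.le_ceil R₀) (by exact_mod_cast hn)
    have hkey := key n hnR
    have hbX0 : (0 : ℝ) ≤ (Nat.card (Metric.closedBall x₀ (n : ℝ)) : ℝ) := Nat.cast_nonneg _
    have h1 : (Nat.card (Metric.closedBall x₀ (n : ℝ)) : ℝ) ^ (1 / (n : ℝ)) ≤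
        (Real.exp (α * M n) * (Nat.card (Metric.closedBall y₀ (n : ℝ)) : ℝ)) ^ (1 / (n : ℝ)) :=
      Real.rpow_le_rpow hbX0 hkey (by positivity)
    rw [Real.mul_rpow (Real.exp_pos _).le (Nat.cast_nonneg _)] at h1
    have h2 : Real.exp (α * M n) ^ (1 / (n : ℝ)) = Real.exp (α * M n / n) := by
      rw [← Real.exp_mul]
      ring_nf
    rwa [h2] at h1
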